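/- Let Φ_1,...,Φ_n be d×c complex matrices with Φ_j*Φ_j = I for each j. Then max_{j≠j'} ‖Φ_j*Φ_{j'}‖₂² ≥ (nc-d)/(d(n-1)). -/

import Mathlib

open Matrix

private theorem welch_col_bound {c : ℕ} (M : Matrix (Fin c) (Fin c) ℂ) (k : Fin c) :
    ∑ i, ‖M i k‖^2 ≤ ‖toEuclideanCLM (𝕜 := ℂ) M‖^2 := by
  set v : EuclideanSpace ℂ (Fin c) := EuclideanSpace.single k (1:ℂ) with hvdef
  have hv : ‖v‖ = 1 := by simp [hvdef, EuclideanSpace.norm_single]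
  have h1 : ‖toEuclideanCLM (𝕜:=ℂ) M v‖ ≤ ‖toEuclideanCLM (𝕜:=ℂ) M‖ := by
    have := (toEuclideanCLM (𝕜:=ℂ) M).le_opNorm v
    rwa [hv, mul_one] at this
  have h2 : ‖toEuclideanCLM (𝕜:=ℂ) M v‖^2 = ∑ i, ‖M i k‖^2 := by
    have happ : toEuclideanCLM (𝕜:=ℂ) M v = (WithLp.equiv 2 _).symm (M *ᵥ Pi.single k 1) := by
      have : v = (WithLp.equiv 2 (Fin c → ℂ)).symm (Pi.single k 1) := rfl
      rw [this]; rfl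
    rw [happ, EuclideanSpace.norm_eq, Real.sq_sqrt (by positivity)]
    simp [Matrix.mulVec_single]
  calc ∑ i, ‖M i k‖^2 = ‖toEuclideanCLM (𝕜:=ℂ) M v‖^2 := h2.symm
    _ ≤ ‖toEuclideanCLM (𝕜:=ℂ) M‖^2 := pow_le_pow_left₀ (norm_nonneg _) h1 2

private theorem welch_trace_self_conj {c : ℕ} (M : Matrix (Fin c) (Fin c) ℂ) :
    (M * Mᴴ).trace = ((∑ i, ∑ k, ‖M i k‖^2 : ℝ) : ℂ) := by
  simp only [Matrix.trace, Matrix.diag_apply, Matrix.mul_apply, Matrix.conjTranspose_apply]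
  push_cast
  congr 1; ext i; congr 1; ext k
  rw [show star (M i k) = (starRingEnd ℂ) (M i k) from rfl, Complex.mul_conj]
  norm_cast
  rw [Complex.normSq_eq_norm_sq]

private theorem welch_trace_rearrange {d c : ℕ} (P Q : Matrix (Fin d) (Fin c) ℂ) :
    ((P * Pᴴ) * (Q * Qᴴ)).trace = ((Qᴴ * P) * (Qᴴ * P)ᴴ).trace := by
  rw [Matrix.conjTranspose_mul, Matrix.conjTranspose_conjTranspose]
  rw [show (P * Pᴴ) * (Q * Qᴴ) = P * (Pᴴ * (Q * Qᴴ)) from by simp only [Matrix.mul_assoc],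
    Matrix.trace_mul_comm,
    show Pᴴ * (Q * Qᴴ) * P = (Pᴴ * Q) * (Qᴴ * P) from by simp only [Matrix.mul_assoc],
    Matrix.trace_mul_comm]

private theorem welch_cs_step {d : ℕ} (S : Matrix (Fin d) (Fin d) ℂ) (hS : Sᴴ = S) :
    (S.trace.re)^2 ≤ (d:ℝ) * ((S*S).trace.re) := by
  have htr : S.trace.re = ∑ i, (S i i).re := by
    simp [Matrix.trace, Matrix.diag_apply, Complex.re_sum]
  have hk : ∀ i k : Fin d, S k i = (starRingEnd ℂ) (S i k) := by
    intro i k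
    rw [← congrFun (congrFun hS k) i]; rfl
  have h2 : ((S*S).trace).re = ∑ i, ∑ k, Complex.normSq (S i k) := by
    simp only [Matrix.trace, Matrix.diag_apply, Matrix.mul_apply]
    rw [Complex.re_sum]
    congr 1; ext i
    rw [Complex.re_sum]
    congr 1; ext k
    rw [hk i k, Complex.mul_conj]
    simp
  have h3 : ∀ i : Fin d, (S i i).re^2 ≤ ∑ k, Complex.normSq (S i k) := by
    intro i
    have h4 : (S i i).re^2 ≤ Complex.normSq (S i i) := by
      rw [Complex.normSq_apply]; nlinarith [sq_nonneg (S i i).im]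
    exact h4.trans (Finset.single_le_sum (f := fun k => Complex.normSq (S i k))
      (fun k _ => Complex.normSq_nonneg _) (Finset.mem_univ i))
  have h5 := sq_sum_le_card_mul_sum_sq (s := (Finset.univ : Finset (Fin d)))
    (f := fun i => (S i i).re)
  simp only [Finset.card_univ, Fintype.card_fin] at h5
  have h6 : ∑ i, (S i i).re^2 ≤ ∑ i, ∑ k, Complex.normSq (S i k) :=
    Finset.sum_le_sum (fun i _ => h3 i)
  rw [htr, h2]
  calc (∑ i, (S i i).re)^2 ≤ (d:ℝ) * ∑ i, (S i i).re^2 := h5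
    _ ≤ (d:ℝ) * ∑ i, ∑ k, Complex.normSq (S i k) :=
        mul_le_mul_of_nonneg_left h6 (by positivity)

/-- Spectral-norm Welch bound: for `d×c` isometries `Φ_j`,
`max_{j≠j'} ‖Φ_j*Φ_{j'}‖₂² ≥ (nc-d)/(d(n-1))`. -/
theorem spectral_welch_bound {d c n : ℕ} (hn : 2 ≤ n) (hc : 1 ≤ c) (hcd : c ≤ d)
    (Φ : Fin n → Matrix (Fin d) (Fin c) ℂ) (hiso : ∀ j, (Φ j)ᴴ * Φ j = 1) :
    ∃ j j', j ≠ j' ∧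
      ((n : ℝ) * c - d) / (d * ((n : ℝ) - 1))
        ≤ ‖Matrix.toEuclideanCLM (𝕜 := ℂ) ((Φ j)ᴴ * Φ j')‖ ^ 2 := by
  by_contra hcon
  push_neg at hcon
  set B : ℝ := ((n : ℝ) * c - d) / (d * ((n : ℝ) - 1)) with hBdef
  -- real constants
  have hd1 : 1 ≤ d := hc.trans hcd
  have hD : (0:ℝ) < d := by exact_mod_cast hd1
  have hC : (0:ℝ) < c := by exact_mod_cast hc
  have hN : (2:ℝ) ≤ n := by exact_mod_cast hn
  -- the Gram-type function
  set g : Fin n → Fin n → ℝ :=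
    fun j j' => ∑ i, ∑ k, ‖((Φ j)ᴴ * Φ j') i k‖^2 with hgdef
  -- diagonal values
  have hdiag : ∀ j, g j j = (c:ℝ) := by
    intro j
    have h1 : ∀ i : Fin c, ∑ k : Fin c, ‖((1 : Matrix (Fin c) (Fin c) ℂ)) i k‖^2 = (1:ℝ) := by
      intro i
      rw [Finset.sum_eq_single i]
      · simp [Matrix.one_apply]
      · intro b _ hb; simp [Matrix.one_apply_ne (Ne.symm hb)]
      · simp
    simp only [hgdef, hiso j]
    rw [Finset.sum_congr rfl (fun i _ => h1 i)]
    simp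
  -- off-diagonal bound from the contradiction hypothesis
  have hoff : ∀ j j', j ≠ j' → g j j' < (c:ℝ) * B := by
    intro j j' hjj
    have h1 : g j j' ≤ (c:ℝ) * ‖toEuclideanCLM (𝕜:=ℂ) ((Φ j)ᴴ * Φ j')‖^2 := by
      simp only [hgdef]
      rw [Finset.sum_comm]
      calc ∑ k : Fin c, ∑ i : Fin c, ‖((Φ j)ᴴ * Φ j') i k‖^2
          ≤ ∑ k : Fin c, ‖toEuclideanCLM (𝕜:=ℂ) ((Φ j)ᴴ * Φ j')‖^2 :=
            Finset.sum_le_sum (fun k _ => welch_col_bound _ k)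
        _ = (c:ℝ) * ‖toEuclideanCLM (𝕜:=ℂ) ((Φ j)ᴴ * Φ j')‖^2 := by
            rw [Finset.sum_const, Finset.card_univ, Fintype.card_fin, nsmul_eq_mul]
    exact h1.trans_lt (mul_lt_mul_of_pos_left (hcon j j' hjj) hC)
  -- the frame operator
  set S : Matrix (Fin d) (Fin d) ℂ := ∑ j, Φ j * (Φ j)ᴴ with hSdef
  have hSherm : Sᴴ = S := by
    rw [hSdef, Matrix.conjTranspose_sum]
    congr 1; ext j
    rw [Matrix.conjTranspose_mul, Matrix.conjTranspose_conjTranspose]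
  have htrS : S.trace = (((n:ℝ) * c : ℝ) : ℂ) := by
    rw [hSdef, Matrix.trace_sum]
    have : ∀ j, (Φ j * (Φ j)ᴴ).trace = (c : ℂ) := by
      intro j
      rw [Matrix.trace_mul_comm, hiso, Matrix.trace_one]
      simp
    simp only [this, Finset.sum_const, Finset.card_univ, Fintype.card_fin, nsmul_eq_mul]
    push_cast; ring
  have hSS : (S*S).trace = ((∑ j, ∑ j', g j' j : ℝ) : ℂ) := by
    rw [hSdef, Finset.sum_mul_sum]
    rw [Matrix.trace_sum]
    push_cast
    congr 1; ext j
    rw [Matrix.trace_sum]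
    congr 1; ext j'
    rw [welch_trace_rearrange, welch_trace_self_conj]
  -- Cauchy–Schwarz for traces
  have hCS := welch_cs_step S hSherm
  rw [htrS, hSS] at hCS
  simp only [Complex.ofReal_re] at hCS
  -- reorganize the double sum
  have hswap : ∑ j, ∑ j', g j' j = ∑ j, ∑ j', g j j' := Finset.sum_comm
  rw [hswap] at hCS
  have hsplit : ∑ j, ∑ j', g j j'
      = (n:ℝ) * c + ∑ j, ∑ j' ∈ Finset.univ.erase j, g j j' := by
    have : ∀ j : Fin n, ∑ j', g j j' = g j j + ∑ j' ∈ Finset.univ.erase j, g j j' :=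
      fun j => (Finset.add_sum_erase _ _ (Finset.mem_univ j)).symm
    rw [Finset.sum_congr rfl (fun j _ => this j), Finset.sum_add_distrib]
    simp only [hdiag, Finset.sum_const, Finset.card_univ, Fintype.card_fin, nsmul_eq_mul]
  -- strict bound on the off-diagonal sum
  have hcard : ∀ j : Fin n, (Finset.univ.erase j).card = n - 1 := by
    intro j
    rw [Finset.card_erase_of_mem (Finset.mem_univ j), Finset.card_univ, Fintype.card_fin]
  have hne : ∀ j : Fin n, (Finset.univ.erase j).Nonempty := by
    intro j
    rw [← Finset.card_pos, hcard j]
    omega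
  have hT : ∑ j, ∑ j' ∈ Finset.univ.erase j, g j j'
      < (n:ℝ) * (((n:ℝ) - 1) * ((c:ℝ) * B)) := by
    have hinner : ∀ j : Fin n, ∑ j' ∈ Finset.univ.erase j, g j j'
        < ((n:ℝ) - 1) * ((c:ℝ) * B) := by
      intro j
      calc ∑ j' ∈ Finset.univ.erase j, g j j'
          < ∑ _j' ∈ Finset.univ.erase j, ((c:ℝ) * B) := by
            refine Finset.sum_lt_sum_of_nonempty (hne j) ?_
            intro j' hj'
            exact hoff j j' (Ne.symm (Finset.mem_erase.mp hj').1)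
        _ = ((n:ℝ) - 1) * ((c:ℝ) * B) := by
            rw [Finset.sum_const, hcard j, nsmul_eq_mul]
            have : ((n - 1 : ℕ) : ℝ) = (n:ℝ) - 1 := by
              have : 1 ≤ n := by omega
              push_cast [this]; ring
            rw [this]
    haveI : Nonempty (Fin n) := ⟨⟨0, by omega⟩⟩
    calc ∑ j, ∑ j' ∈ Finset.univ.erase j, g j j'
        < ∑ _j : Fin n, ((n:ℝ) - 1) * ((c:ℝ) * B) :=
          Finset.sum_lt_sum_of_nonempty Finset.univ_nonempty (fun j _ => hinner j)
      _ = (n:ℝ) * (((n:ℝ) - 1) * ((c:ℝ) * B)) := by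
          rw [Finset.sum_const, Finset.card_univ, Fintype.card_fin, nsmul_eq_mul]
  -- arithmetic contradiction
  set T : ℝ := ∑ j, ∑ j' ∈ Finset.univ.erase j, g j j' with hTdef
  rw [hsplit] at hCS
  have hN1 : (0:ℝ) < (n:ℝ) - 1 := by linarith
  have hBeq : B * ((d:ℝ) * ((n:ℝ) - 1)) = (n:ℝ) * c - d := by
    rw [hBdef]
    field_simp
  have hkey : (d:ℝ) * ((n:ℝ) * (((n:ℝ) - 1) * ((c:ℝ) * B)))
      = (n:ℝ) * c * ((n:ℝ) * c - d) := by
    rw [← hBeq]; ring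
  nlinarith [mul_lt_mul_of_pos_left hT hD]
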